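/- There exists a constant c > 0 such that for every integer s ≥ 2 there exist s unit vectors φ₁, …, φ_s in ℂ² with |⟨φ_i, φ_j⟩| ≤ 1 − c/s for all i ≠ j. -/

import Mathlib

set_option maxHeartbeats 1000000


open scoped InnerProductSpace

private lemma key_normSq (a b : ℂ) :
    Complex.normSq (1 + (starRingEnd ℂ) a * b)
      = (1 + Complex.normSq a) * (1 + Complex.normSq b) - Complex.normSq (a - b) := by
  simp [Complex.normSq_apply, Complex.add_re, Complex.add_im, Complex.mul_re, Complex.mul_im,
    Complex.sub_re, Complex.sub_im, Complex.conj_re, Complex.conj_im]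
  ring

private lemma sqrt_bound (A X D t : ℝ) (hA : 1 ≤ A) (hX : 0 ≤ X)
    (hX2 : X ^ 2 = A ^ 2 - D) (ht : 0 ≤ t) (ht1 : t ≤ 1)
    (hd : 2 * t * A ^ 2 ≤ D) : X ≤ (1 - t) * A := by
  have h1 : X ^ 2 ≤ ((1 - t) * A) ^ 2 := by nlinarith [sq_nonneg (t * A), sq_nonneg A]
  have h2 : 0 ≤ (1 - t) * A := by nlinarith
  nlinarith [sq_nonneg (X - (1 - t) * A), sq_nonneg (X + (1 - t) * A)]

private lemma int_gap (x y : ℕ) (h : x ≠ y) : (1:ℝ) ≤ ((x:ℝ) - (y:ℝ)) ^ 2 := by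
  have h1 : (x:ℤ) ≠ (y:ℤ) := by exact_mod_cast h
  have h2 : 1 ≤ |(x:ℤ) - (y:ℤ)| := Int.one_le_abs (by omega)
  have h3 : 1 ≤ ((x:ℤ) - (y:ℤ)) ^ 2 := by nlinarith [sq_abs ((x:ℤ) - (y:ℤ))]
  exact_mod_cast h3

/-- There is a constant `c > 0` such that for every `s ≥ 2` there
are `s` unit vectors in `ℂ²` with pairwise inner products of absolute value at most
`1 - c/s`. -/
theorem exists_many_states_inner_le_one_sub :
    ∃ c : ℝ, 0 < c ∧ ∀ s : ℕ, 2 ≤ s →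
      ∃ φ : Fin s → EuclideanSpace ℂ (Fin 2),
        (∀ i, ‖φ i‖ = 1) ∧ ∀ i j, i ≠ j → ‖⟪φ i, φ j⟫_ℂ‖ ≤ 1 - c / s := by
  refine ⟨1 / 54, by norm_num, ?_⟩
  intro s hs
  have hs0 : 0 < s := by omega
  set m : ℕ := Nat.sqrt (s - 1) + 1 with hm
  have hm0 : 0 < m := Nat.succ_pos _
  have hsm : s ≤ m ^ 2 := by
    have h : s - 1 < m * m := Nat.lt_succ_sqrt (s - 1)
    rw [pow_two]; omega
  have hm3 : m ^ 2 ≤ 3 * s := by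
    have h1 : Nat.sqrt (s - 1) * Nat.sqrt (s - 1) ≤ s - 1 := by
      have := Nat.sqrt_le' (s - 1); rwa [pow_two] at this
    have h2 : Nat.sqrt (s - 1) ≤ s - 1 := Nat.sqrt_le_self _
    have h3 : m * m = Nat.sqrt (s - 1) * Nat.sqrt (s - 1) + 2 * Nat.sqrt (s - 1) + 1 := by
      rw [hm]; ring
    rw [pow_two]; omega
  set a : Fin s → ℕ := fun k => (k : ℕ) / m with ha
  set b : Fin s → ℕ := fun k => (k : ℕ) % m with hb
  have hab_inj : ∀ i j : Fin s, a i = a j → b i = b j → i = j := by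
    intro i j h1 h2
    apply Fin.ext
    have hi := Nat.div_add_mod (i : ℕ) m
    have hj := Nat.div_add_mod (j : ℕ) m
    rw [← hi, ← hj, show (i:ℕ)/m = (j:ℕ)/m from h1, show (i:ℕ)%m = (j:ℕ)%m from h2]
  have ha_lt : ∀ k : Fin s, a k < m := by
    intro k
    have hk : (k : ℕ) < m ^ 2 := lt_of_lt_of_le k.2 hsm
    have : (k : ℕ) < m * m := by nlinarith
    exact Nat.div_lt_of_lt_mul this
  have hb_lt : ∀ k : Fin s, b k < m := fun k => Nat.mod_lt _ hm0
  set z : Fin s → ℂ := fun k => ⟨(a k : ℝ) / m, (b k : ℝ) / m⟩ with hz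
  have hn2 : ∀ k, Complex.normSq (z k) ≤ 2 := by
    intro k
    have h1 : (a k : ℝ) / m ≤ 1 := by
      rw [div_le_one (by positivity)]
      exact_mod_cast (ha_lt k).le
    have h2 : (b k : ℝ) / m ≤ 1 := by
      rw [div_le_one (by positivity)]
      exact_mod_cast (hb_lt k).le
    have h3 : (0:ℝ) ≤ (a k : ℝ) / m := by positivity
    have h4 : (0:ℝ) ≤ (b k : ℝ) / m := by positivity
    rw [hz]
    simp only [Complex.normSq_mk]
    nlinarith
  set r : Fin s → ℝ := fun k => Real.sqrt (1 + Complex.normSq (z k)) with hr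
  have hr1 : ∀ k, 1 ≤ r k := by
    intro k
    rw [hr]
    have := Complex.normSq_nonneg (z k)
    nlinarith [Real.sq_sqrt (by nlinarith : (0:ℝ) ≤ 1 + Complex.normSq (z k)),
      Real.sqrt_nonneg (1 + Complex.normSq (z k))]
  have hr0 : ∀ k, 0 < r k := fun k => lt_of_lt_of_le one_pos (hr1 k)
  have hrsq : ∀ k, r k ^ 2 = 1 + Complex.normSq (z k) := by
    intro k
    exact Real.sq_sqrt (by nlinarith [Complex.normSq_nonneg (z k)])
  have hr3 : ∀ k, r k ^ 2 ≤ 3 := by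
    intro k; rw [hrsq]; linarith [hn2 k]
  set v : Fin s → EuclideanSpace ℂ (Fin 2) := fun k => !₂[1, z k] with hv
  have hvnorm : ∀ k, ‖v k‖ = r k := by
    intro k
    rw [EuclideanSpace.norm_eq]
    congr 1
    rw [Fin.sum_univ_two]
    simp [hv, Complex.sq_norm]
  set φ : Fin s → EuclideanSpace ℂ (Fin 2) := fun k => ((r k : ℂ))⁻¹ • v k with hφ
  have hφnorm : ∀ k, ‖φ k‖ = 1 := by
    intro k
    rw [hφ]
    simp only [norm_smul, hvnorm, norm_inv, Complex.norm_real,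
      Real.norm_eq_abs, abs_of_pos (hr0 k)]
    exact inv_mul_cancel₀ (hr0 k).ne'
  refine ⟨φ, hφnorm, ?_⟩
  intro i j hij
  have hinner : ⟪φ i, φ j⟫_ℂ = ((r i : ℂ))⁻¹ * ((r j : ℂ))⁻¹ * (1 + (starRingEnd ℂ) (z i) * z j) := by
    rw [hφ]
    simp only [inner_smul_left, inner_smul_right]
    rw [show ⟪v i, v j⟫_ℂ = ∑ k : Fin 2, (starRingEnd ℂ) (v i k) * (v j k) from by simp [PiLp.inner_apply, RCLike.inner_apply, mul_comm]]
    rw [Fin.sum_univ_two]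
    simp [hv]
    ring
  have hnormin : ‖⟪φ i, φ j⟫_ℂ‖ = (r i)⁻¹ * (r j)⁻¹ * ‖1 + (starRingEnd ℂ) (z i) * z j‖ := by
    rw [hinner]
    simp only [norm_mul, norm_inv, Complex.norm_real, Real.norm_eq_abs,
      abs_of_pos (hr0 i), abs_of_pos (hr0 j)]
  have hmR : (0:ℝ) < (m:ℝ) := by exact_mod_cast hm0
  have hd : (1 : ℝ) / (m:ℝ) ^ 2 ≤ Complex.normSq (z i - z j) := by
    have hre : z i - z j = ⟨(a i : ℝ) / m - (a j : ℝ) / m, (b i : ℝ) / m - (b j : ℝ) / m⟩ := by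
      rw [hz]; rfl
    rw [hre, Complex.normSq_mk]
    rcases eq_or_ne (a i) (a j) with hA | hA
    · have hB : b i ≠ b j := fun hB => hij (hab_inj i j hA hB)
      have h1 : (1:ℝ) ≤ ((b i : ℝ) - (b j : ℝ)) ^ 2 := int_gap _ _ hB
      calc (1:ℝ) / (m:ℝ) ^ 2 ≤ ((b i : ℝ) - (b j : ℝ)) ^ 2 / (m:ℝ) ^ 2 := by
            apply div_le_div_of_nonneg_right h1 (by positivity) |>.trans_eq rfl
        _ = ((b i : ℝ) / m - (b j : ℝ) / m) * ((b i : ℝ) / m - (b j : ℝ) / m) := by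
            field_simp
        _ ≤ _ := le_add_of_nonneg_left (mul_self_nonneg _)
    · have h1 : (1:ℝ) ≤ ((a i : ℝ) - (a j : ℝ)) ^ 2 := int_gap _ _ hA
      calc (1:ℝ) / (m:ℝ) ^ 2 ≤ ((a i : ℝ) - (a j : ℝ)) ^ 2 / (m:ℝ) ^ 2 := by
            apply div_le_div_of_nonneg_right h1 (by positivity) |>.trans_eq rfl
        _ = ((a i : ℝ) / m - (a j : ℝ) / m) * ((a i : ℝ) / m - (a j : ℝ) / m) := by
            field_simp
        _ ≤ _ := le_add_of_nonneg_right (mul_self_nonneg _)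
  -- final estimate
  set X : ℝ := ‖1 + (starRingEnd ℂ) (z i) * z j‖ with hX
  set D : ℝ := Complex.normSq (z i - z j) with hD
  set t : ℝ := (1 / 54 : ℝ) / s with ht
  have hsR : (2:ℝ) ≤ (s:ℝ) := by exact_mod_cast hs
  have hsp : (0:ℝ) < (s:ℝ) := by linarith
  have ht0 : 0 ≤ t := by positivity
  have ht1 : t ≤ 1 := by
    rw [ht, div_div, div_le_one (by positivity)]
    nlinarith
  have hX0 : 0 ≤ X := by rw [hX]; exact norm_nonneg _
  have hX2 : X ^ 2 = (r i * r j) ^ 2 - D := by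
    rw [hX, Complex.sq_norm, key_normSq, mul_pow, hrsq, hrsq, hD]
  have hA1 : 1 ≤ r i * r j := by nlinarith [hr1 i, hr1 j]
  have hA9 : (r i * r j) ^ 2 ≤ 9 := by
    rw [mul_pow]
    calc (r i) ^ 2 * (r j) ^ 2 ≤ 3 * 3 := mul_le_mul (hr3 i) (hr3 j) (sq_nonneg _) (by norm_num)
      _ = 9 := by norm_num
  have hm3R : ((m:ℝ)) ^ 2 ≤ 3 * (s:ℝ) := by exact_mod_cast hm3
  have hdt : 2 * t * (r i * r j) ^ 2 ≤ D := by
    have hA0 : 0 ≤ (r i * r j) ^ 2 := sq_nonneg _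
    calc 2 * t * (r i * r j) ^ 2 ≤ 2 * t * 9 :=
          mul_le_mul_of_nonneg_left hA9 (by positivity)
      _ = 1 / (3 * (s:ℝ)) := by rw [ht]; field_simp; ring
      _ ≤ 1 / (m:ℝ) ^ 2 := by
          apply one_div_le_one_div_of_le (by positivity) hm3R
      _ ≤ D := hd
  have hXle : X ≤ (1 - t) * (r i * r j) :=
    sqrt_bound (r i * r j) X D t hA1 hX0 hX2 ht0 ht1 hdt
  rw [hnormin]
  have hAp : 0 < r i * r j := by linarith
  calc (r i)⁻¹ * (r j)⁻¹ * X = X / (r i * r j) := by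
        rw [eq_div_iff hAp.ne']
        field_simp [(hr0 i).ne', (hr0 j).ne']
    _ ≤ 1 - t := by
        rw [div_le_iff₀ hAp]
        linarith
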